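/- Let σ > 0 and let Φ be the standard normal CDF. Define h(μ) = μ/(1 − 2Φ(−μ/σ)) for μ > 0. Then h is (weakly) increasing on (0, ∞) and lim_{μ→0⁺} h(μ) = σ·√(π/2). -/

import Mathlib

open MeasureTheory ProbabilityTheory Set Filter intervalIntegral

/-- The standard normal cumulative distribution function. -/
noncomputable def Phi (x : ℝ) : ℝ :=
  ∫ t in Set.Iic x, ProbabilityTheory.gaussianPDFReal 0 1 t

namespace PhiAux

noncomputable def f : ℝ → ℝ := gaussianPDFReal 0 1

lemma f_eq (x : ℝ) : f x = (Real.sqrt (2 * Real.pi))⁻¹ * Real.exp (-(x^2) / 2) := by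
  simp [f, gaussianPDFReal]

lemma f_cont : Continuous f := by
  have : Continuous fun x : ℝ => (Real.sqrt (2 * Real.pi))⁻¹ * Real.exp (-(x^2) / 2) := by
    fun_prop
  convert this using 1
  ext x; exact f_eq x

lemma f_pos (x : ℝ) : 0 < f x := gaussianPDFReal_pos 0 1 x one_ne_zero

lemma f_neg (x : ℝ) : f (-x) = f x := by simp [f_eq]

lemma f_int : Integrable f := integrable_gaussianPDFReal 0 1

lemma f_anti {s t : ℝ} (hs : 0 ≤ s) (hst : s ≤ t) : f t ≤ f s := by
  rw [f_eq, f_eq]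
  have h1 : -(t^2)/2 ≤ -(s^2)/2 := by nlinarith
  have h2 : Real.exp (-(t^2)/2) ≤ Real.exp (-(s^2)/2) := Real.exp_le_exp.mpr h1
  have h3 : (0:ℝ) ≤ (Real.sqrt (2 * Real.pi))⁻¹ := by positivity
  exact mul_le_mul_of_nonneg_left h2 h3

noncomputable def G (a : ℝ) : ℝ := ∫ t in (0:ℝ)..a, f t

lemma Phi_zero : Phi 0 = 1 / 2 := by
  have hsplit : (∫ x in Iic (0:ℝ), f x) + ∫ x in Ioi (0:ℝ), f x = ∫ x, f x :=
    integral_Iic_add_Ioi f_int.integrableOn f_int.integrableOn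
  have htot : ∫ x, f x = 1 := integral_gaussianPDFReal_eq_one 0 one_ne_zero
  have hsym : (∫ x in Iic (0:ℝ), f x) = ∫ x in Ioi (0:ℝ), f x := by
    have := integral_comp_neg_Iic (0:ℝ) f
    simp only [neg_zero] at this
    rw [← this]
    exact setIntegral_congr_fun measurableSet_Iic fun x _ => (f_neg x).symm
  have : Phi 0 = ∫ x in Iic (0:ℝ), f x := rfl
  rw [this]; linarith

lemma key (a : ℝ) : 1 - 2 * Phi (-a) = 2 * G a := by
  have hsub : Phi (-a) - Phi 0 = ∫ t in (0:ℝ)..(-a), f t :=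
    integral_Iic_sub_Iic f_int.integrableOn f_int.integrableOn
  have hflip : (∫ t in (0:ℝ)..(-a), f t) = - G a := by
    have h1 : (∫ t in (0:ℝ)..a, f (-t)) = ∫ t in (-a)..(0:ℝ), f t := by
      simpa using intervalIntegral.integral_comp_neg (a := (0:ℝ)) (b := a) f
    have h2 : (∫ t in (0:ℝ)..a, f (-t)) = G a := by
      unfold G; congr 1; ext t; exact f_neg t
    rw [intervalIntegral.integral_symm, ← h1, h2]
  rw [Phi_zero] at hsub
  linarith

lemma G_intble (a b : ℝ) : IntervalIntegrable f volume a b := f_int.intervalIntegrable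

lemma const_le_G {a : ℝ} (ha : 0 < a) : a * f a ≤ G a := by
  have h : (∫ t in (0:ℝ)..a, f a) ≤ ∫ t in (0:ℝ)..a, f t := by
    apply intervalIntegral.integral_mono_on ha.le intervalIntegrable_const (G_intble 0 a)
    intro x hx
    exact f_anti hx.1 hx.2
  simpa [mul_comm, G] using h

lemma G_le_const {a b : ℝ} (ha : 0 ≤ a) (hab : a ≤ b) :
    (∫ t in a..b, f t) ≤ (b - a) * f a := by
  have h : (∫ t in a..b, f t) ≤ ∫ t in a..b, f a := by
    apply intervalIntegral.integral_mono_on hab (G_intble a b) intervalIntegrable_const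
    intro x hx
    exact f_anti ha hx.1
  simpa [mul_comm] using h

lemma G_pos {a : ℝ} (ha : 0 < a) : 0 < G a :=
  lt_of_lt_of_le (mul_pos ha (f_pos a)) (const_le_G ha)

lemma G_ratio {a b : ℝ} (ha : 0 < a) (hab : a ≤ b) : a * G b ≤ b * G a := by
  have hsplit : G a + (∫ t in a..b, f t) = G b :=
    intervalIntegral.integral_add_adjacent_intervals (G_intble 0 a) (G_intble a b)
  have h1 := G_le_const ha.le hab
  have h2 := const_le_G ha
  nlinarith [f_pos a, (f_pos b).le]

lemma G_deriv : HasDerivAt G (f 0) 0 := by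
  have := intervalIntegral.integral_hasDerivAt_right (G_intble 0 0)
    (f_cont.stronglyMeasurableAtFilter _ _) f_cont.continuousAt
  exact this

lemma G_slope : Tendsto (fun a => G a / a) (nhdsWithin 0 (Set.Ioi 0)) (nhds (f 0)) := by
  have h := hasDerivAt_iff_tendsto_slope.mp G_deriv
  have hG0 : G 0 = 0 := by simp [G]
  have : Tendsto (slope G 0) (nhdsWithin 0 (Set.Ioi 0)) (nhds (f 0)) :=
    h.mono_left (nhdsWithin_mono 0 (fun x hx => ne_of_gt hx))
  refine this.congr' ?_
  filter_upwards [self_mem_nhdsWithin] with x hx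
  simp [slope, hG0, div_eq_inv_mul]

end PhiAux

open PhiAux in
/-- `h(μ) = μ/(1 − 2Φ(−μ/σ))` is weakly increasing on `(0, ∞)` and tends to
`σ√(π/2)` as `μ → 0⁺`. -/
theorem h_monotone_and_limit (σ : ℝ) (hσ : 0 < σ)
    (h : ℝ → ℝ) (hh : ∀ μ, h μ = μ / (1 - 2 * Phi (-μ / σ))) :
    MonotoneOn h (Set.Ioi 0) ∧
    Filter.Tendsto h (nhdsWithin 0 (Set.Ioi 0)) (nhds (σ * Real.sqrt (Real.pi / 2))) := by
  have hform : ∀ μ : ℝ, h μ = μ / (2 * G (μ / σ)) := by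
    intro μ
    rw [hh μ, show -μ / σ = -(μ / σ) by ring, key]
  constructor
  · intro μ₁ h₁ μ₂ h₂ h12
    simp only [Set.mem_Ioi] at h₁ h₂
    rw [hform, hform]
    have ha₁ : 0 < μ₁ / σ := div_pos h₁ hσ
    have ha₂ : 0 < μ₂ / σ := div_pos h₂ hσ
    have hG₁ := G_pos ha₁
    have hG₂ := G_pos ha₂
    rw [div_le_div_iff₀ (by positivity) (by positivity)]
    have hr := G_ratio ha₁ ((div_le_div_iff_of_pos_right hσ).mpr h12)
    have : μ₁ / σ * G (μ₂ / σ) ≤ μ₂ / σ * G (μ₁ / σ) := hr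
    calc μ₁ * (2 * G (μ₂ / σ)) = 2 * σ * (μ₁ / σ * G (μ₂ / σ)) := by field_simp
      _ ≤ 2 * σ * (μ₂ / σ * G (μ₁ / σ)) := by
          apply mul_le_mul_of_nonneg_left this (by positivity)
      _ = μ₂ * (2 * G (μ₁ / σ)) := by field_simp
  · have hf0 : f 0 = (Real.sqrt (2 * Real.pi))⁻¹ := by simp [f_eq]
    have hf0pos : 0 < f 0 := f_pos 0
    -- the map μ ↦ μ / σ tends to 0 within Ioi 0
    have hmap : Tendsto (fun μ : ℝ => μ / σ) (nhdsWithin 0 (Set.Ioi 0))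
        (nhdsWithin 0 (Set.Ioi 0)) := by
      apply tendsto_nhdsWithin_of_tendsto_nhds_of_eventually_within
      · have : Tendsto (fun μ : ℝ => μ / σ) (nhds 0) (nhds (0 / σ)) :=
          (tendsto_id.div_const σ)
        simpa using this.mono_left nhdsWithin_le_nhds
      · filter_upwards [self_mem_nhdsWithin] with x hx
        exact div_pos hx hσ
    have hcomp : Tendsto (fun μ : ℝ => G (μ / σ) / (μ / σ)) (nhdsWithin 0 (Set.Ioi 0))
        (nhds (f 0)) := G_slope.comp hmap
    have hlim : Tendsto (fun μ : ℝ => σ / (2 * (G (μ / σ) / (μ / σ))))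
        (nhdsWithin 0 (Set.Ioi 0)) (nhds (σ / (2 * f 0))) := by
      apply Tendsto.div tendsto_const_nhds (hcomp.const_mul 2)
      positivity
    have hval : σ / (2 * f 0) = σ * Real.sqrt (Real.pi / 2) := by
      rw [hf0]
      have hs4 : Real.sqrt 4 = 2 := by
        rw [show (4:ℝ) = 2^2 by norm_num, Real.sqrt_sq (by norm_num)]
      have hs : Real.sqrt (Real.pi / 2) = Real.sqrt (2 * Real.pi) / 2 := by
        rw [show Real.pi / 2 = (2 * Real.pi) / 4 by ring,
          Real.sqrt_div (by positivity), hs4]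
      rw [hs]
      have hne : Real.sqrt (2 * Real.pi) ≠ 0 := by positivity
      field_simp
    rw [← hval]
    refine hlim.congr' ?_
    filter_upwards [self_mem_nhdsWithin] with μ hμ
    have hμ' : (0:ℝ) < μ := hμ
    have ha : 0 < μ / σ := div_pos hμ' hσ
    have hG := G_pos ha
    rw [hform]
    field_simp
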